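/- The group algebra (loop algebra) RL of an IP loop L over a commutative ring R is a Hopf quasigroup, with η(1)=e_L, product extended linearly from L, δ(u)=u⊗u, ε(u)=1, and antipode λ(u)=u⁻¹ on basis elements. -/

import Mathlib

open TensorProduct

noncomputable section

/-- A Hopf quasigroup over a commutative ring `R` (Klim–Majid), given by a unital magma
and comonoid structure on `H` whose counit and comultiplication are unital magma morphisms,
together with an antipode satisfying the four Hopf quasigroup identities. -/
structure HopfQuasigroup (R : Type*) [CommRing R] (H : Type*) [AddCommGroup H] [Module R H] :
    Type _ where
  mul : H ⊗[R] H →ₗ[R] H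
  unit : H
  counit : H →ₗ[R] R
  comul : H →ₗ[R] H ⊗[R] H
  antipode : H →ₗ[R] H
  mul_unit_left : ∀ h : H, mul (unit ⊗ₜ[R] h) = h
  mul_unit_right : ∀ h : H, mul (h ⊗ₜ[R] unit) = h
  coassoc : (TensorProduct.assoc R H H H).toLinearMap ∘ₗ comul.rTensor H ∘ₗ comul
      = comul.lTensor H ∘ₗ comul
  counit_left : (TensorProduct.lid R H).toLinearMap ∘ₗ counit.rTensor H ∘ₗ comul = LinearMap.id
  counit_right : (TensorProduct.rid R H).toLinearMap ∘ₗ counit.lTensor H ∘ₗ comul = LinearMap.id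
  counit_unit : counit unit = 1
  counit_mul : counit ∘ₗ mul
      = (TensorProduct.lid R R).toLinearMap ∘ₗ TensorProduct.map counit counit
  comul_unit : comul unit = unit ⊗ₜ[R] unit
  comul_mul : comul ∘ₗ mul = TensorProduct.map mul mul
      ∘ₗ (TensorProduct.tensorTensorTensorComm R H H H H).toLinearMap
      ∘ₗ TensorProduct.map comul comul
  antipode_lH₁ : mul ∘ₗ TensorProduct.map antipode mul
      ∘ₗ (TensorProduct.assoc R H H H).toLinearMap ∘ₗ comul.rTensor H
      = (TensorProduct.lid R H).toLinearMap ∘ₗ counit.rTensor H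
  antipode_lH₂ : mul ∘ₗ mul.lTensor H ∘ₗ (antipode.rTensor H).lTensor H
      ∘ₗ (TensorProduct.assoc R H H H).toLinearMap ∘ₗ comul.rTensor H
      = (TensorProduct.lid R H).toLinearMap ∘ₗ counit.rTensor H
  antipode_rH₁ : mul ∘ₗ mul.rTensor H ∘ₗ (TensorProduct.assoc R H H H).symm.toLinearMap
      ∘ₗ (antipode.rTensor H).lTensor H ∘ₗ comul.lTensor H
      = (TensorProduct.rid R H).toLinearMap ∘ₗ counit.lTensor H
  antipode_rH₂ : mul ∘ₗ TensorProduct.map mul antipode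
      ∘ₗ (TensorProduct.assoc R H H H).symm.toLinearMap ∘ₗ comul.lTensor H
      = (TensorProduct.rid R H).toLinearMap ∘ₗ counit.lTensor H

/-- A loop with the inverse property (IP loop): a unital magma in which every element
has a two-sided inverse satisfying `u⁻¹(uv) = v = (vu)u⁻¹`. -/
structure IPLoop (L : Type*) where
  mul : L → L → L
  e : L
  inv : L → L
  one_mul : ∀ x : L, mul e x = x
  mul_one : ∀ x : L, mul x e = x
  ip_left : ∀ u v : L, mul (inv u) (mul u v) = v
  ip_right : ∀ u v : L, mul (mul v u) (inv u) = v

section LoopAlgebra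

variable (R : Type*) [CommRing R] {L : Type*} (M : IPLoop L)

/-- Linearised multiplication on the loop algebra. -/
def loopAlgMul : ((L →₀ R) ⊗[R] (L →₀ R)) →ₗ[R] (L →₀ R) :=
  Finsupp.lmapDomain R R (fun p : L × L => M.mul p.1 p.2) ∘ₗ
    (finsuppTensorFinsupp' R L L).toLinearMap

/-- Grouplike comultiplication on the loop algebra. -/
def loopAlgComul (L : Type*) : (L →₀ R) →ₗ[R] ((L →₀ R) ⊗[R] (L →₀ R)) :=
  (finsuppTensorFinsupp' R L L).symm.toLinearMap ∘ₗ
    Finsupp.lmapDomain R R (fun u : L => (u, u))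

/-- Counit on the loop algebra. -/
def loopAlgCounit : (L →₀ R) →ₗ[R] R :=
  Finsupp.linearCombination R (fun _ : L => (1 : R))

/-- Antipode on the loop algebra. -/
def loopAlgAntipode : (L →₀ R) →ₗ[R] (L →₀ R) :=
  Finsupp.lmapDomain R R M.inv

@[simp] lemma loopAlgMul_single (u v : L) (r s : R) :
    loopAlgMul R M (Finsupp.single u r ⊗ₜ[R] Finsupp.single v s)
      = Finsupp.single (M.mul u v) (r * s) := by
  rw [loopAlgMul, LinearMap.comp_apply, LinearEquiv.coe_coe,
    finsuppTensorFinsupp'_single_tmul_single, Finsupp.lmapDomain_apply, Finsupp.mapDomain_single]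

@[simp] lemma loopAlgComul_single (u : L) (r : R) :
    loopAlgComul R L (Finsupp.single u r)
      = Finsupp.single u r ⊗ₜ[R] Finsupp.single u (1 : R) := by
  rw [loopAlgComul, LinearMap.comp_apply, Finsupp.lmapDomain_apply, Finsupp.mapDomain_single,
    LinearEquiv.coe_coe, ← mul_one r, finsuppTensorFinsupp'_symm_single_mul, mul_one]

@[simp] lemma loopAlgCounit_single (u : L) (r : R) :
    loopAlgCounit R (L := L) (Finsupp.single u r) = r := by
  simp [loopAlgCounit]

@[simp] lemma loopAlgAntipode_single (u : L) (r : R) :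
    loopAlgAntipode R M (Finsupp.single u r) = Finsupp.single (M.inv u) r := by
  simp [loopAlgAntipode]

variable {M}

lemma IPLoop.inv_mul (u : L) : M.mul (M.inv u) u = M.e := by
  have := M.ip_left u M.e; rwa [M.mul_one] at this

lemma IPLoop.mul_inv (u : L) : M.mul u (M.inv u) = M.e := by
  have := M.ip_right u M.e; rwa [M.one_mul] at this

lemma IPLoop.inv_inv (u : L) : M.inv (M.inv u) = u := by
  have := M.ip_right (M.inv u) u
  rwa [IPLoop.mul_inv, M.one_mul] at this

lemma IPLoop.ip_left' (u v : L) : M.mul u (M.mul (M.inv u) v) = v := by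
  have := M.ip_left (M.inv u) v; rwa [IPLoop.inv_inv] at this

lemma IPLoop.ip_right' (u v : L) : M.mul (M.mul v (M.inv u)) u = v := by
  have := M.ip_right (M.inv u) v; rwa [IPLoop.inv_inv] at this

end LoopAlgebra

/-- The loop algebra `RL` of an IP loop `L` over a commutative ring `R` is a Hopf
quasigroup, with unit `e_L`, product extended linearly from `L`, grouplike
comultiplication `δ(u) = u ⊗ u`, counit `ε(u) = 1` and antipode `λ(u) = u⁻¹` on the
basis elements. -/
theorem ipLoop_loopAlgebra_hopfQuasigroup (R : Type*) [CommRing R] {L : Type*}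
    (M : IPLoop L) :
    ∃ hq : HopfQuasigroup R (L →₀ R),
      (∀ u v : L, hq.mul (Finsupp.single u (1 : R) ⊗ₜ[R] Finsupp.single v (1 : R))
          = Finsupp.single (M.mul u v) (1 : R)) ∧
      hq.unit = Finsupp.single M.e (1 : R) ∧
      (∀ u : L, hq.comul (Finsupp.single u (1 : R))
          = Finsupp.single u (1 : R) ⊗ₜ[R] Finsupp.single u (1 : R)) ∧
      (∀ u : L, hq.counit (Finsupp.single u (1 : R)) = 1) ∧
      (∀ u : L, hq.antipode (Finsupp.single u (1 : R))
          = Finsupp.single (M.inv u) (1 : R)) := by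
  refine ⟨{ mul := loopAlgMul R M
            unit := Finsupp.single M.e (1 : R)
            counit := loopAlgCounit R
            comul := loopAlgComul R L
            antipode := loopAlgAntipode R M
            mul_unit_left := ?_
            mul_unit_right := ?_
            coassoc := ?_
            counit_left := ?_
            counit_right := ?_
            counit_unit := ?_
            counit_mul := ?_
            comul_unit := ?_
            comul_mul := ?_
            antipode_lH₁ := ?_
            antipode_lH₂ := ?_
            antipode_rH₁ := ?_
            antipode_rH₂ := ?_ },
          fun u v => by simp, rfl, fun u => by simp, fun u => by simp, fun u => by simp⟩
  · intro h
    induction h using Finsupp.induction_linear with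
    | zero => simp
    | add f g hf hg => rw [TensorProduct.tmul_add, map_add, hf, hg]
    | single a b => simp [M.one_mul]
  · intro h
    induction h using Finsupp.induction_linear with
    | zero => simp
    | add f g hf hg => rw [TensorProduct.add_tmul, map_add, hf, hg]
    | single a b => simp [M.mul_one]
  · ext u
    simp
  · ext u
    simp
  · ext u
    simp
  · simp
  · ext u v
    simp
  · simp
  · ext u v
    simp
  · ext u v
    simp [M.ip_left]
  · ext u v
    simp [IPLoop.ip_left']
  · ext u v
    simp [IPLoop.ip_right']
  · ext u v
    simp [M.ip_right]
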